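/- arXiv:1803.02673 — 2 statements merged into one kernel-verified Lean document; each statement's English description precedes it below -/
import Mathlib

section
/- Given density operators ρ and σ on ℂ^d, there exist decompositions ρ = ∑ᵢ sᵢ|uᵢ⟩⟨uᵢ| and σ = ∑ᵢ tᵢ|vᵢ⟩⟨vᵢ| with unit vectors uᵢ, vᵢ, the vᵢ orthonormal, ⟨vᵢ|uᵢ⟩ ≥ 0 for all i, and F(ρ,σ) = ∑ᵢ √(sᵢtᵢ)⟨vᵢ|uᵢ⟩. -/
open scoped Matrix Kronecker ComplexOrder

noncomputable section

namespace QEMD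

variable {m n : Type*} [Fintype m] [Fintype n] [DecidableEq m] [DecidableEq n]

/-- Total square root: the PSD square root if `A` is PSD, else `0`. -/
def msqrt (A : Matrix n n ℂ) : Matrix n n ℂ :=
  letI := Classical.dec A.PosSemidef
  if h : A.PosSemidef then
    (h.1.eigenvectorUnitary : Matrix n n ℂ) *
      Matrix.diagonal ((↑) ∘ (Real.sqrt ·) ∘ h.1.eigenvalues) *
      (star h.1.eigenvectorUnitary : Matrix n n ℂ)
  else 0

/-- Trace norm `‖A‖₁ = Tr √(AᴴA)`. -/
def traceNorm (A : Matrix n n ℂ) : ℝ :=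
  ((msqrt (Aᴴ * A)).trace).re

/-- Trace distance `D(ρ,σ) = ½‖ρ-σ‖₁`. -/
def traceDist (ρ σ : Matrix n n ℂ) : ℝ := traceNorm (ρ - σ) / 2

/-- Fidelity `F(ρ,σ) = Tr √(√ρ σ √ρ)`. -/
def fidelity (ρ σ : Matrix n n ℂ) : ℝ :=
  ((msqrt (msqrt ρ * σ * msqrt ρ)).trace).re

/-- Density matrix predicate. -/
def IsDensity (ρ : Matrix n n ℂ) : Prop := ρ.PosSemidef ∧ ρ.trace = 1

/-- Projector `|v⟩⟨v|` onto a vector. -/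
def proj (v : n → ℂ) : Matrix n n ℂ := Matrix.of fun i j => v i * star (v j)

/-- Partial trace over the first (left) factor. -/
def traceLeft (ρ : Matrix (m × n) (m × n) ℂ) : Matrix n n ℂ :=
  Matrix.of fun i j => ∑ k, ρ (k, i) (k, j)

/-- Partial trace over the second (right) factor. -/
def traceRight (ρ : Matrix (m × n) (m × n) ℂ) : Matrix m m ℂ :=
  Matrix.of fun i j => ∑ k, ρ (i, k) (j, k)

/-- The swap operator `S|αβ⟩ = |βα⟩` on `ℂ^d ⊗ ℂ^d`. -/
def swap (d : ℕ) : Matrix (Fin d × Fin d) (Fin d × Fin d) ℂ :=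
  Matrix.of fun p q => if p.1 = q.2 ∧ p.2 = q.1 then 1 else 0

/-- Projection onto the symmetric subspace, `P_s = (I + S)/2`. -/
def Psym (d : ℕ) : Matrix (Fin d × Fin d) (Fin d × Fin d) ℂ := (2:ℂ)⁻¹ • (1 + swap d)

/-- Projection onto the antisymmetric subspace, `P_as = (I - S)/2`. -/
def Pasym (d : ℕ) : Matrix (Fin d × Fin d) (Fin d × Fin d) ℂ := (2:ℂ)⁻¹ • (1 - swap d)

/-- `ρAB` is a quantum coupling of `ρA` and `ρB`. -/
def IsCoupling (ρAB : Matrix (m × n) (m × n) ℂ) (ρA : Matrix m m ℂ)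
    (ρB : Matrix n n ℂ) : Prop :=
  IsDensity ρAB ∧ traceRight ρAB = ρA ∧ traceLeft ρAB = ρB

/-- The maximally entangled vector `|Φ⟩ = (1/√d) ∑ᵢ |i⟩|i⟩`. -/
def maxEnt (d : ℕ) : Fin d × Fin d → ℂ :=
  fun p => if p.1 = p.2 then ((1 / Real.sqrt d : ℝ) : ℂ) else 0

section SqrtPort

open scoped MatrixOrder

/-- The PSD square root via the spectral decomposition (as in the older Mathlib). -/
def _root_.Matrix.PosSemidef.sqrt {A : Matrix n n ℂ} (hA : A.PosSemidef) : Matrix n n ℂ :=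
  (hA.1.eigenvectorUnitary : Matrix n n ℂ) *
    Matrix.diagonal ((↑) ∘ Real.sqrt ∘ hA.1.eigenvalues) *
    (star hA.1.eigenvectorUnitary : Matrix n n ℂ)

lemma _root_.Matrix.PosSemidef.sqrt_eq_cfcSqrt {A : Matrix n n ℂ} (hA : A.PosSemidef) :
    hA.sqrt = CFC.sqrt A := by
  rw [CFC.sqrt_eq_cfc, cfc_nnreal_eq_real _ A hA.nonneg, hA.1.cfc_eq]
  simp only [Matrix.IsHermitian.cfc, Unitary.conjStarAlgAut_apply, Matrix.PosSemidef.sqrt]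
  congr 2
  refine congrArg Matrix.diagonal (funext fun i => ?_)
  simp [Real.coe_sqrt, Real.coe_toNNReal', max_eq_left (hA.eigenvalues_nonneg i)]

lemma _root_.Matrix.PosSemidef.posSemidef_sqrt {A : Matrix n n ℂ} (hA : A.PosSemidef) :
    hA.sqrt.PosSemidef := by
  rw [hA.sqrt_eq_cfcSqrt]
  exact Matrix.nonneg_iff_posSemidef.mp (CFC.sqrt_nonneg A)

lemma _root_.Matrix.PosSemidef.sqrt_mul_self {A : Matrix n n ℂ} (hA : A.PosSemidef) :
    hA.sqrt * hA.sqrt = A := by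
  rw [hA.sqrt_eq_cfcSqrt]
  exact CFC.sqrt_mul_sqrt_self A hA.nonneg

lemma _root_.Matrix.PosSemidef.eq_sqrt_of_sq_eq {A B : Matrix n n ℂ} (hA : A.PosSemidef)
    (hB : B.PosSemidef) (h : A ^ 2 = B) : A = hB.sqrt := by
  rw [hB.sqrt_eq_cfcSqrt, eq_comm, CFC.sqrt_eq_iff _ _ hB.nonneg hA.nonneg, ← h, sq]

end SqrtPort

open Matrix

set_option maxHeartbeats 1000000 in
/-- Polar decomposition: `M = √(M Mᴴ) * W` with `W` unitary. -/
lemma polar (M : Matrix n n ℂ) :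
    ∃ W : Matrix n n ℂ, star W * W = 1 ∧ W * star W = 1 ∧
      M = (posSemidef_self_mul_conjTranspose M).sqrt * W := by
  have hH : (M * Mᴴ).PosSemidef := posSemidef_self_mul_conjTranspose M
  set hE : (M * Mᴴ).IsHermitian := hH.1 with hEdef
  set U : Matrix n n ℂ := (hE.eigenvectorUnitary : Matrix n n ℂ) with hUdef
  set e : n → ℝ := hE.eigenvalues with hedef
  have he0 : ∀ i, 0 ≤ e i := hH.eigenvalues_nonneg
  have hU1 : star U * U = 1 := Unitary.coe_star_mul_self hE.eigenvectorUnitary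
  have hU2 : U * star U = 1 := Unitary.coe_mul_star_self hE.eigenvectorUnitary
  set N : Matrix n n ℂ := star U * M with hNdef
  have hNN : N * Nᴴ = diagonal ((↑) ∘ e) := by
    have h1 : N * Nᴴ = star U * (M * Mᴴ) * U := by
      rw [hNdef, conjTranspose_mul]
      simp only [star_eq_conjTranspose, conjTranspose_conjTranspose]
      noncomm_ring
    rw [h1]
    have hs : M * Mᴴ = U * diagonal ((↑) ∘ e) * star U := by
      have := hE.spectral_theorem
      rw [Unitary.conjStarAlgAut_apply] at this
      exact this
    rw [hs]
    simp only [mul_assoc]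
    rw [hU1, mul_one, ← mul_assoc, hU1, one_mul]
  have hrow : ∀ i j, ∑ k, N i k * star (N j k) = if i = j then (e i : ℂ) else 0 := by
    intro i j
    have h2 : (N * Nᴴ) i j = ∑ k, N i k * star (N j k) := by
      simp [Matrix.mul_apply, conjTranspose_apply]
    rw [← h2, hNN, diagonal_apply]
    simp [Function.comp]
  have hconj : ∀ i j, ∑ k, (starRingEnd ℂ) (N i k) * N j k
      = if i = j then (e i : ℂ) else 0 := by
    intro i j
    have h5 := congrArg (starRingEnd ℂ) (hrow i j)
    rw [map_sum] at h5
    simpa [Complex.star_def, apply_ite (starRingEnd ℂ), Complex.conj_ofReal,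
      mul_comm] using h5
  have hzero : ∀ i, e i = 0 → ∀ k, N i k = 0 := by
    intro i hi k
    have h := hrow i i
    rw [if_pos rfl, hi, Complex.ofReal_zero] at h
    have h2 : ∑ k, Complex.normSq (N i k) = 0 := by
      have h' : ((∑ k, Complex.normSq (N i k) : ℝ) : ℂ) = 0 := by
        push_cast
        simpa [Complex.mul_conj] using h
      exact_mod_cast h'
    have h4 := (Finset.sum_eq_zero_iff_of_nonneg (fun k _ => Complex.normSq_nonneg _)).mp h2 k
      (Finset.mem_univ k)
    exact Complex.normSq_eq_zero.mp h4
  -- orthonormal family on the support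
  set v : n → EuclideanSpace ℂ n :=
    fun i => WithLp.toLp 2 (fun k => ((Real.sqrt (e i) : ℝ) : ℂ)⁻¹ * N i k) with hvdef
  have hval : Orthonormal ℂ (Set.restrict {i | e i ≠ 0} v) := by
    rw [orthonormal_iff_ite]
    rintro ⟨i, hi⟩ ⟨j, hj⟩
    have hinner : inner ℂ (v i) (v j) =
        (starRingEnd ℂ) ((Real.sqrt (e i) : ℂ)⁻¹) * (Real.sqrt (e j) : ℂ)⁻¹ *
          ∑ k, (starRingEnd ℂ) (N i k) * N j k := by
      simp only [PiLp.inner_apply, RCLike.inner_apply, hvdef]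
      rw [Finset.mul_sum]
      congr 1 with k
      rw [map_mul (starRingEnd ℂ)]
      ring
    show inner ℂ (v i) (v j) = _
    rw [hinner, hconj i j]
    by_cases hij : i = j
    · subst hij
      simp only [if_pos rfl, Subtype.mk.injEq, map_inv₀, Complex.conj_ofReal, if_true]
      have hre : ((√(e i))⁻¹ * (√(e i))⁻¹ * e i : ℝ) = 1 := by
        rw [← mul_inv, Real.mul_self_sqrt (he0 i)]
        exact inv_mul_cancel₀ hi
      exact_mod_cast hre
    · have hij' : ¬ ((⟨i, hi⟩ : {i | e i ≠ 0}) = ⟨j, hj⟩) := fun h => hij (by cases h; rfl)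
      simp [hij', hij]
  obtain ⟨b, hb⟩ := hval.exists_orthonormalBasis_extension_of_card_eq
    finrank_euclideanSpace
  set W' : Matrix n n ℂ := Matrix.of fun i k => b i k with hW'def
  have hW'rows : W' * star W' = 1 := by
    ext i j
    have hb2 : inner ℂ (b i) (b j) = if i = j then 1 else 0 :=
      orthonormal_iff_ite.mp b.orthonormal i j
    have : (W' * star W') i j = (starRingEnd ℂ) (inner ℂ (b i) (b j)) := by
      simp only [Matrix.mul_apply, Matrix.star_apply, PiLp.inner_apply, RCLike.inner_apply,
        map_sum, hW'def, Matrix.of_apply, Complex.star_def]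
      congr 1 with k
      rw [RingHom.map_mul, Complex.conj_conj]
      exact mul_comm _ _
    rw [this, hb2]
    simp [Matrix.one_apply, apply_ite (starRingEnd ℂ), eq_comm]
  have hW'rows' : star W' * W' = 1 := mul_eq_one_comm.mp hW'rows
  have hDW : diagonal ((↑) ∘ Real.sqrt ∘ e) * W' = N := by
    ext i k
    rw [Matrix.diagonal_mul]
    by_cases hi : e i = 0
    · simp [hzero i hi k, Function.comp, hi]
    · have hbi : b i = v i := hb i hi
      have : W' i k = v i k := by rw [hW'def]; simp [hbi]
      rw [this, hvdef]
      simp only [Function.comp_apply]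
      rw [← mul_assoc, ← Complex.ofReal_inv, ← Complex.ofReal_mul,
        mul_inv_cancel₀ (Real.sqrt_ne_zero'.mpr (lt_of_le_of_ne (he0 i) (Ne.symm hi)))]
      simp
  refine ⟨U * W', ?_, ?_, ?_⟩
  · rw [Matrix.star_mul, mul_assoc, ← mul_assoc (star U), hU1, one_mul, hW'rows']
  · rw [Matrix.star_mul, mul_assoc, ← mul_assoc W', hW'rows, one_mul, hU2]
  · have hsqrt : hH.sqrt = U * diagonal ((↑) ∘ Real.sqrt ∘ e) * star U := rfl
    rw [hsqrt]
    rw [mul_assoc, mul_assoc, ← mul_assoc (star U), hU1, one_mul, hDW]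
    rw [← mul_assoc, hU2, one_mul]


lemma trace_sqrt_comm (C : Matrix n n ℂ) :
    (posSemidef_self_mul_conjTranspose C).sqrt.trace
      = (posSemidef_conjTranspose_mul_self C).sqrt.trace := by
  obtain ⟨W, hW1, hW2, hC⟩ := polar C
  set P := (posSemidef_self_mul_conjTranspose C).sqrt with hPdef
  have hP : P.PosSemidef := (posSemidef_self_mul_conjTranspose C).posSemidef_sqrt
  have hPP : P * P = C * Cᴴ := (posSemidef_self_mul_conjTranspose C).sqrt_mul_self
  have hkey : Cᴴ * C = (star W * P * W) ^ 2 := by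
    have hCH : Cᴴ = star W * P := by
      rw [hC, conjTranspose_mul, hP.1, star_eq_conjTranspose]
    rw [pow_two, hCH, hC]
    rw [show star W * P * W * (star W * P * W) = star W * P * (W * star W) * P * W by
      noncomm_ring]
    rw [hW2, mul_one]
    noncomm_ring
  have hPSD : (star W * P * W).PosSemidef := by
    have := hP.conjTranspose_mul_mul_same W
    rwa [← Matrix.star_eq_conjTranspose] at this
  have hsq : star W * P * W = (posSemidef_conjTranspose_mul_self C).sqrt :=
    hPSD.eq_sqrt_of_sq_eq _ hkey.symm
  rw [← hsq, Matrix.trace_mul_cycle, hW2, one_mul]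

lemma psd_diag_nonneg {P : Matrix n n ℂ} (hP : P.PosSemidef) (i : n) :
    0 ≤ P i i := by
  exact hP.diag_nonneg

lemma trace_eq_sum_eigenvalues {A : Matrix n n ℂ} (hA : A.IsHermitian) :
    A.trace = ∑ i, (hA.eigenvalues i : ℂ) := by
  conv_lhs => rw [hA.spectral_theorem, Unitary.conjStarAlgAut_apply]
  rw [Matrix.trace_mul_cycle]
  rw [Unitary.coe_star_mul_self hA.eigenvectorUnitary, one_mul,
    Matrix.trace_diagonal]
  rfl

lemma sqrt_congr {X Y : Matrix n n ℂ} (h : X = Y) (hX : X.PosSemidef) (hY : Y.PosSemidef) :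
    hX.sqrt = hY.sqrt := by subst h; rfl

lemma star_mul_self_c (zc : ℂ) : star zc * zc = ((‖zc‖^2 : ℝ) : ℂ) := by
  rw [Complex.star_def, Complex.conj_mul']
  norm_cast

lemma norm_eq_re_of_nonneg {w : ℂ} (h : 0 ≤ w) : ‖w‖ = w.re := by
  obtain ⟨hre, him⟩ := Complex.le_def.mp h
  have hw : w = (w.re : ℂ) := Complex.ext rfl (by simpa using him.symm)
  rw [hw]
  simp only [Complex.norm_real]
  exact abs_of_nonneg (by simpa using hre)

set_option maxHeartbeats 2000000 in
theorem stmt16 (d : ℕ) (ρ σ : Matrix (Fin d) (Fin d) ℂ)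
    (hρ : IsDensity ρ) (hσ : IsDensity σ) :
    ∃ (s t : Fin d → ℝ) (u v : Fin d → Fin d → ℂ),
      (∀ i, 0 ≤ s i ∧ s i ≤ 1) ∧ (∀ i, 0 ≤ t i ∧ t i ≤ 1) ∧
      (∀ i, ∑ k, ‖u i k‖ ^ 2 = 1) ∧ (∀ i, ∑ k, ‖v i k‖ ^ 2 = 1) ∧
      (∀ i j, ∑ k, star (v i k) * v j k = if i = j then 1 else 0) ∧
      ρ = ∑ i, (s i : ℂ) • proj (u i) ∧
      σ = ∑ i, (t i : ℂ) • proj (v i) ∧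
      (∀ i, 0 ≤ (∑ k, star (v i k) * u i k).re ∧
        (∑ k, star (v i k) * u i k).im = 0) ∧
      fidelity ρ σ
        = ∑ i, Real.sqrt (s i * t i) * (∑ k, star (v i k) * u i k).re := by
  classical
  obtain ⟨hρp, hρtr⟩ := hρ
  obtain ⟨hσp, hσtr⟩ := hσ
  have hσH : σ.IsHermitian := hσp.1
  set t : Fin d → ℝ := hσH.eigenvalues with htdef
  set V : Matrix (Fin d) (Fin d) ℂ := (hσH.eigenvectorUnitary : Matrix (Fin d) (Fin d) ℂ)
    with hVdef
  have hV1 : star V * V = 1 := Unitary.coe_star_mul_self hσH.eigenvectorUnitary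
  have ht0 : ∀ i, 0 ≤ t i := hσp.eigenvalues_nonneg
  have hspec : σ = V * diagonal ((↑) ∘ t) * star V := by
    have := hσH.spectral_theorem
    rw [Unitary.conjStarAlgAut_apply] at this
    exact this
  set v : Fin d → Fin d → ℂ := fun i k => V k i with hvdef
  have htsum : ∑ i, t i = 1 := by
    have h := trace_eq_sum_eigenvalues hσH
    rw [hσtr] at h
    have h2 : ((∑ i, t i : ℝ) : ℂ) = 1 := by push_cast; rw [← h]
    exact_mod_cast h2
  have ht1 : ∀ i, t i ≤ 1 := fun i =>
    htsum ▸ Finset.single_le_sum (f := t) (fun j _ => ht0 j) (Finset.mem_univ i)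
  have hvortho : ∀ i j, ∑ k, star (v i k) * v j k = if i = j then 1 else 0 := by
    intro i j
    have h : (star V * V) i j = ∑ k, star (v i k) * v j k := by
      simp [Matrix.mul_apply, Matrix.star_apply, hvdef]
    rw [← h, hV1, Matrix.one_apply]
  have hvunit : ∀ i, ∑ k, ‖v i k‖ ^ 2 = 1 := by
    intro i
    have h := hvortho i i
    rw [if_pos rfl] at h
    have h2 : ((∑ k, ‖v i k‖ ^ 2 : ℝ) : ℂ) = 1 := by
      push_cast
      rw [← h]
      exact Finset.sum_congr rfl fun k _ => by rw [star_mul_self_c]; push_cast; ring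
    exact_mod_cast h2
  -- B with columns √tᵢ vᵢ
  set B : Matrix (Fin d) (Fin d) ℂ := V * diagonal ((↑) ∘ Real.sqrt ∘ t) with hBdef
  have hDD : (diagonal ((↑) ∘ Real.sqrt ∘ t : Fin d → ℂ)) * diagonal ((↑) ∘ Real.sqrt ∘ t)
      = diagonal ((↑) ∘ t) := by
    rw [Matrix.diagonal_mul_diagonal]
    refine congrArg Matrix.diagonal (funext fun i => ?_)
    show ((Real.sqrt (t i) : ℝ) : ℂ) * ((Real.sqrt (t i) : ℝ) : ℂ) = ((t i : ℝ) : ℂ)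
    rw [← Complex.ofReal_mul, Real.mul_self_sqrt (ht0 i)]
  have hDstar : (diagonal ((↑) ∘ Real.sqrt ∘ t : Fin d → ℂ))ᴴ
      = diagonal ((↑) ∘ Real.sqrt ∘ t) := by
    rw [Matrix.diagonal_conjTranspose]
    refine congrArg Matrix.diagonal (funext fun i => ?_)
    show star (((Real.sqrt (t i) : ℝ)) : ℂ) = _
    simp only [Complex.star_def, Complex.conj_ofReal, Function.comp_apply]
  have hBB : B * Bᴴ = σ := by
    rw [hBdef, Matrix.conjTranspose_mul, hDstar]
    rw [show V * diagonal ((↑) ∘ Real.sqrt ∘ t : Fin d → ℂ) *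
        (diagonal ((↑) ∘ Real.sqrt ∘ t) * Vᴴ)
      = V * (diagonal ((↑) ∘ Real.sqrt ∘ t) * diagonal ((↑) ∘ Real.sqrt ∘ t)) * Vᴴ
      by noncomm_ring]
    rw [hDD]
    exact hspec.symm
  clear_value B
  -- ρ side
  set R : Matrix (Fin d) (Fin d) ℂ := hρp.sqrt with hRdef
  have hRpsd : R.PosSemidef := hρp.posSemidef_sqrt
  have hRR : R * R = ρ := hρp.sqrt_mul_self
  set M : Matrix (Fin d) (Fin d) ℂ := Bᴴ * R with hMdef
  obtain ⟨W, hW1, hW2, hMW⟩ := polar M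
  set Q : Matrix (Fin d) (Fin d) ℂ := (posSemidef_self_mul_conjTranspose M).sqrt with hQdef
  have hQpsd : Q.PosSemidef := (posSemidef_self_mul_conjTranspose M).posSemidef_sqrt
  set A : Matrix (Fin d) (Fin d) ℂ := R * star W with hAdef
  have hAH : Aᴴ = W * R := by
    rw [hAdef, Matrix.conjTranspose_mul, ← Matrix.star_eq_conjTranspose (star W), star_star,
      hRpsd.1]
  have hAA : A * Aᴴ = ρ := by
    rw [hAH, hAdef, mul_assoc, ← mul_assoc (star W), hW1, one_mul, hRR]
  have hBA : Bᴴ * A = Q := by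
    rw [hAdef, ← mul_assoc, ← hMdef, hMW, mul_assoc, hW2, mul_one]
  clear_value M
  -- s, z, phase, u
  set s : Fin d → ℝ := fun i => ∑ k, ‖A k i‖ ^ 2 with hsdef
  have hs0 : ∀ i, 0 ≤ s i := fun i => Finset.sum_nonneg fun k _ => sq_nonneg _
  have hAcol0 : ∀ i, s i = 0 → ∀ k, A k i = 0 := by
    intro i hi k
    have h := (Finset.sum_eq_zero_iff_of_nonneg fun k _ => sq_nonneg ‖A k i‖).mp hi k
      (Finset.mem_univ k)
    rw [pow_eq_zero_iff (two_ne_zero), norm_eq_zero] at h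
    exact h
  set z : Fin d → ℂ := fun i => ∑ k, star (v i k) * A k i with hzdef
  set ph : Fin d → ℂ := fun i => if z i = 0 then 1 else (‖z i‖ : ℂ) * (z i)⁻¹ with hphdef
  have hphz : ∀ i, ph i * z i = (‖z i‖ : ℂ) := by
    intro i
    by_cases h : z i = 0
    · simp [hphdef, h]
    · rw [hphdef]
      simp only [h, if_false]
      field_simp
  have hphnorm : ∀ i, ‖ph i‖ = 1 := by
    intro i
    by_cases h : z i = 0
    · simp [hphdef, h]
    · rw [hphdef]
      simp only [h, if_false]
      rw [norm_mul, Complex.norm_real, norm_inv, Real.norm_eq_abs, abs_norm]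
      exact mul_inv_cancel₀ (norm_ne_zero_iff.mpr h)
  set u : Fin d → Fin d → ℂ := fun i => if s i = 0 then v i
      else fun k => ph i * ((Real.sqrt (s i) : ℂ))⁻¹ * A k i with hudef
  -- sum of s = 1
  have hssum : ∑ i, s i = 1 := by
    have h3 : (A * Aᴴ).trace = ((∑ i, s i : ℝ) : ℂ) := by
      calc (A * Aᴴ).trace = ∑ j, ∑ i, A j i * star (A j i) := by
            simp [Matrix.trace, Matrix.diag, Matrix.mul_apply, Matrix.conjTranspose_apply]
        _ = ∑ j, ∑ i, ((‖A j i‖ ^ 2 : ℝ) : ℂ) := by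
            refine Finset.sum_congr rfl fun j _ => Finset.sum_congr rfl fun i _ => ?_
            rw [mul_comm, star_mul_self_c]
        _ = ∑ i, ∑ j, ((‖A j i‖ ^ 2 : ℝ) : ℂ) := Finset.sum_comm
        _ = ((∑ i, s i : ℝ) : ℂ) := by rw [hsdef]; push_cast; rfl
    rw [hAA, hρtr] at h3
    exact_mod_cast h3.symm
  have hs1 : ∀ i, s i ≤ 1 := fun i =>
    hssum ▸ Finset.single_le_sum (f := s) (fun j _ => hs0 j) (Finset.mem_univ i)
  -- Q diagonal facts
  have hQdiag : ∀ i, Q i i = (Real.sqrt (t i) : ℂ) * z i := by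
    intro i
    rw [← hBA, Matrix.mul_apply, hzdef]
    simp only
    rw [Finset.mul_sum]
    refine Finset.sum_congr rfl fun k _ => ?_
    rw [Matrix.conjTranspose_apply, hBdef, Matrix.mul_diagonal]
    simp only [Function.comp_apply, hvdef]
    rw [star_mul',
      show star ((Real.sqrt (t i) : ℝ) : ℂ) = ((Real.sqrt (t i) : ℝ) : ℂ) by
        rw [Complex.star_def, Complex.conj_ofReal]]
    ring
  have hQnn : ∀ i, 0 ≤ Q i i := fun i => psd_diag_nonneg hQpsd i
  -- unit norms of u
  have huunit : ∀ i, ∑ k, ‖u i k‖ ^ 2 = 1 := by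
    intro i
    by_cases h : s i = 0
    · simp only [hudef, h, if_true, if_pos]
      exact hvunit i
    · simp only [hudef, h, if_false]
      have hn : ∀ k, ‖ph i * ((Real.sqrt (s i) : ℂ))⁻¹ * A k i‖ ^ 2
          = (Real.sqrt (s i))⁻¹ ^ 2 * ‖A k i‖ ^ 2 := by
        intro k
        rw [norm_mul, norm_mul, hphnorm i, one_mul, norm_inv, Complex.norm_real,
          Real.norm_eq_abs, abs_of_nonneg (Real.sqrt_nonneg _)]
        ring
      rw [Finset.sum_congr rfl fun k _ => hn k, ← Finset.mul_sum]
      have hsum : ∑ k, ‖A k i‖ ^ 2 = s i := rfl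
      rw [hsum, inv_pow, Real.sq_sqrt (hs0 i)]
      exact inv_mul_cancel₀ h
  -- inner products
  have hinner : ∀ i, ∑ k, star (v i k) * u i k
      = if s i = 0 then 1 else (((Real.sqrt (s i))⁻¹ * ‖z i‖ : ℝ) : ℂ) := by
    intro i
    by_cases h : s i = 0
    · simp only [hudef, h, if_true, if_pos]
      simpa using hvortho i i
    · simp only [hudef, h, if_false]
      have hstep : ∑ k, star (v i k) * (ph i * ((Real.sqrt (s i) : ℂ))⁻¹ * A k i)
          = ph i * ((Real.sqrt (s i) : ℂ))⁻¹ * z i := by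
        rw [hzdef]
        simp only
        rw [Finset.mul_sum]
        exact Finset.sum_congr rfl fun k _ => by ring
      rw [hstep, mul_comm (ph i), mul_assoc, hphz i]
      push_cast
      ring
  -- decomposition of ρ
  have hρdecomp : ρ = ∑ i, (s i : ℂ) • proj (u i) := by
    rw [← hAA]
    ext j k
    rw [Matrix.sum_apply, Matrix.mul_apply]
    refine Finset.sum_congr rfl fun i _ => ?_
    rw [Matrix.conjTranspose_apply, Matrix.smul_apply]
    by_cases h : s i = 0
    · simp [hAcol0 i h j, h]
    · simp only [hudef, h, if_false, proj, Matrix.of_apply, smul_eq_mul]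
      have hps : ph i * star (ph i) = 1 := by
        rw [mul_comm, star_mul_self_c, hphnorm i]
        norm_num
      have hstarc : star ((Real.sqrt (s i) : ℝ) : ℂ) = ((Real.sqrt (s i) : ℝ) : ℂ) := by
        rw [Complex.star_def, Complex.conj_ofReal]
      have hcc : ((Real.sqrt (s i) : ℝ) : ℂ) * ((Real.sqrt (s i) : ℝ) : ℂ)
          = ((s i : ℝ) : ℂ) := by
        rw [← Complex.ofReal_mul, Real.mul_self_sqrt (hs0 i)]
      have hcne : ((Real.sqrt (s i) : ℝ) : ℂ) ≠ 0 := by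
        simpa using Real.sqrt_ne_zero'.mpr (lt_of_le_of_ne (hs0 i) (Ne.symm h))
      have key : ((s i : ℝ) : ℂ) * (((Real.sqrt (s i) : ℝ) : ℂ))⁻¹
          * (((Real.sqrt (s i) : ℝ) : ℂ))⁻¹ = 1 := by
        rw [mul_assoc, ← mul_inv, hcc]
        exact mul_inv_cancel₀ (by exact_mod_cast h)
      rw [star_mul', star_mul', star_inv₀, hstarc]
      linear_combination (- ((s i : ℂ) * (((Real.sqrt (s i) : ℝ) : ℂ))⁻¹
          * (((Real.sqrt (s i) : ℝ) : ℂ))⁻¹ * A j i * star (A k i))) * hps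
        - (A j i * star (A k i)) * key
  -- decomposition of σ
  have hσdecomp : σ = ∑ i, (t i : ℂ) • proj (v i) := by
    rw [hspec]
    ext j k
    rw [Matrix.sum_apply, Matrix.mul_apply]
    refine Finset.sum_congr rfl fun i _ => ?_
    rw [Matrix.mul_diagonal, Matrix.smul_apply]
    simp only [proj, Matrix.of_apply, smul_eq_mul, Function.comp_apply, Matrix.star_apply,
      hvdef]
    ring
  -- fidelity = Re trace Q
  have hRσR : (R * σ * R).PosSemidef := by
    have hh := hσp.mul_mul_conjTranspose_same R
    rwa [hRpsd.1] at hh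
  have hfid : fidelity ρ σ = (Q.trace).re := by
    have hmsρ : msqrt ρ = R := by
      unfold msqrt
      exact dif_pos hρp
    have hms2 : msqrt (R * σ * R) = hRσR.sqrt := by
      unfold msqrt
      exact dif_pos hRσR
    unfold fidelity
    rw [hmsρ, hms2]
    set C : Matrix (Fin d) (Fin d) ℂ := R * B with hCdef
    have hCC : C * Cᴴ = R * σ * R := by
      rw [hCdef, Matrix.conjTranspose_mul, hRpsd.1,
        show R * B * (Bᴴ * R) = R * (B * Bᴴ) * R by noncomm_ring, hBB]
    have hCtC : Cᴴ * C = M * Mᴴ := by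
      rw [hCdef, Matrix.conjTranspose_mul, hRpsd.1, hMdef, Matrix.conjTranspose_mul,
        Matrix.conjTranspose_conjTranspose, hRpsd.1]
    have e1 : hRσR.sqrt = (posSemidef_self_mul_conjTranspose C).sqrt := sqrt_congr hCC.symm _ _
    have e2 : (posSemidef_conjTranspose_mul_self C).sqrt
        = (posSemidef_self_mul_conjTranspose M).sqrt := sqrt_congr hCtC _ _
    have e3 : (posSemidef_self_mul_conjTranspose C).sqrt.trace = Q.trace := by
      rw [trace_sqrt_comm C, e2, hQdef]
    rw [e1, e3]
  refine ⟨s, t, u, v, fun i => ⟨hs0 i, hs1 i⟩, fun i => ⟨ht0 i, ht1 i⟩, huunit, hvunit,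
    hvortho, hρdecomp, hσdecomp, ?_, ?_⟩
  · intro i
    rw [hinner i]
    by_cases h : s i = 0
    · simp [h]
    · simp only [h, if_false, Complex.ofReal_re, Complex.ofReal_im, and_true]
      positivity
  · rw [hfid, Matrix.trace, Complex.re_sum]
    refine Finset.sum_congr rfl fun i _ => ?_
    rw [hinner i]
    by_cases h : s i = 0
    · rw [h]
      simp only [zero_mul, Real.sqrt_zero, zero_mul]
      have hz0 : z i = 0 := by
        rw [hzdef]
        simp only
        refine Finset.sum_eq_zero fun k _ => ?_
        rw [hAcol0 i h k, mul_zero]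
      rw [Matrix.diag_apply, hQdiag i, hz0, mul_zero, Complex.zero_re]
    · simp only [h, if_false, Complex.ofReal_re]
      have h1 : (Q i i).re = Real.sqrt (t i) * ‖z i‖ := by
        rw [← norm_eq_re_of_nonneg (hQnn i), hQdiag i, norm_mul, Complex.norm_real,
          Real.norm_eq_abs, abs_of_nonneg (Real.sqrt_nonneg _)]
      rw [Matrix.diag_apply, h1, Real.sqrt_mul (hs0 i)]
      have hsne : Real.sqrt (s i) ≠ 0 :=
        Real.sqrt_ne_zero'.mpr (lt_of_le_of_ne (hs0 i) (Ne.symm h))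
      field_simp
end QEMD
end
end

section
/- For any tripartite density operator ρ_{ABC} on ℂ^d ⊗ ℂ^d ⊗ ℂ^{d₂}, the fidelity between the marginals ρ_{AC} and ρ_{BC} satisfies F(ρ_{AC}, ρ_{BC}) ≥ |Tr(P_as ρ_{AB}) − Tr(P_s ρ_{AB})|, where P_s, P_as are the symmetric/antisymmetric projections on the A⊗B factor and ρ_{AB} = Tr_C ρ_{ABC}. -/
open scoped Matrix Kronecker ComplexOrder

noncomputable section

namespace QEMD

variable {m n : Type*} [Fintype m] [Fintype n] [DecidableEq m] [DecidableEq n]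

section Aux

variable {a b c : Type*} [Fintype a] [Fintype b] [Fintype c]
  [DecidableEq a] [DecidableEq b] [DecidableEq c]

lemma msqrt_eq {A : Matrix a a ℂ} (h : A.PosSemidef) : msqrt A =
    (h.1.eigenvectorUnitary : Matrix a a ℂ) *
      Matrix.diagonal ((↑) ∘ (Real.sqrt ·) ∘ h.1.eigenvalues) *
      (star h.1.eigenvectorUnitary : Matrix a a ℂ) := by
  unfold msqrt
  exact dif_pos h

lemma msqrt_posSemidef {A : Matrix a a ℂ} (h : A.PosSemidef) : (msqrt A).PosSemidef := by
  rw [msqrt_eq h]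
  have e : (star h.1.eigenvectorUnitary : Matrix a a ℂ) = (h.1.eigenvectorUnitary : Matrix a a ℂ)ᴴ := rfl
  rw [e]
  apply Matrix.PosSemidef.mul_mul_conjTranspose_same
  refine Matrix.posSemidef_diagonal_iff.mpr fun i => ?_
  simp only [Function.comp_apply]
  exact Complex.zero_le_real.mpr (Real.sqrt_nonneg _)

lemma msqrt_mul_self {A : Matrix a a ℂ} (h : A.PosSemidef) : msqrt A * msqrt A = A := by
  rw [msqrt_eq h]
  have hV : (star h.1.eigenvectorUnitary : Matrix a a ℂ) * (h.1.eigenvectorUnitary : Matrix a a ℂ) = 1 :=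
    Matrix.mem_unitaryGroup_iff'.mp h.1.eigenvectorUnitary.2
  calc (h.1.eigenvectorUnitary : Matrix a a ℂ) *
        Matrix.diagonal ((↑) ∘ (Real.sqrt ·) ∘ h.1.eigenvalues) *
        (star h.1.eigenvectorUnitary : Matrix a a ℂ) *
        ((h.1.eigenvectorUnitary : Matrix a a ℂ) *
        Matrix.diagonal ((↑) ∘ (Real.sqrt ·) ∘ h.1.eigenvalues) *
        (star h.1.eigenvectorUnitary : Matrix a a ℂ))
      = (h.1.eigenvectorUnitary : Matrix a a ℂ) *
        (Matrix.diagonal ((↑) ∘ (Real.sqrt ·) ∘ h.1.eigenvalues) *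
        ((star h.1.eigenvectorUnitary : Matrix a a ℂ) * (h.1.eigenvectorUnitary : Matrix a a ℂ)) *
        Matrix.diagonal ((↑) ∘ (Real.sqrt ·) ∘ h.1.eigenvalues)) *
        (star h.1.eigenvectorUnitary : Matrix a a ℂ) := by simp only [Matrix.mul_assoc]
    _ = (h.1.eigenvectorUnitary : Matrix a a ℂ) *
        Matrix.diagonal (Complex.ofReal ∘ h.1.eigenvalues) *
        (star h.1.eigenvectorUnitary : Matrix a a ℂ) := by
      rw [hV, Matrix.mul_one, Matrix.diagonal_mul_diagonal]
      simp only [Function.comp_apply, ← Complex.ofReal_mul, Real.mul_self_sqrt,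
        h.eigenvalues_nonneg]
      rfl
    _ = A := h.1.spectral_theorem.symm

/-- Contraction predicate. -/
def Con (M : Matrix a b ℂ) : Prop := ((1 : Matrix b b ℂ) - Mᴴ * M).PosSemidef

omit [DecidableEq a] in
lemma con_mul {A : Matrix a b ℂ} {B : Matrix b c ℂ} (hA : Con A) (hB : Con B) :
    Con (A * B) := by
  have h1 : (Bᴴ * ((1 : Matrix b b ℂ) - Aᴴ * A) * B).PosSemidef :=
    hA.conjTranspose_mul_mul_same B
  have h2 := hB.add h1
  have h3 : ((1 : Matrix c c ℂ) - Bᴴ * B) + Bᴴ * ((1 : Matrix b b ℂ) - Aᴴ * A) * B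
      = 1 - (A * B)ᴴ * (A * B) := by
    rw [Matrix.conjTranspose_mul]
    simp only [Matrix.mul_sub, Matrix.sub_mul, Matrix.mul_one, Matrix.one_mul, Matrix.mul_assoc]
    abel
  rw [Con, ← h3]
  exact h2

lemma conjD_mul {V : Matrix a a ℂ} (hV : Vᴴ * V = 1) (f g : a → ℂ) :
    (V * Matrix.diagonal f * Vᴴ) * (V * Matrix.diagonal g * Vᴴ)
      = V * Matrix.diagonal (fun i => f i * g i) * Vᴴ := by
  have : Matrix.diagonal f * (Vᴴ * V) * Matrix.diagonal g = Matrix.diagonal fun i => f i * g i := by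
    rw [hV, Matrix.mul_one, Matrix.diagonal_mul_diagonal]
  calc (V * Matrix.diagonal f * Vᴴ) * (V * Matrix.diagonal g * Vᴴ)
      = V * (Matrix.diagonal f * (Vᴴ * V) * Matrix.diagonal g) * Vᴴ := by
        simp only [Matrix.mul_assoc]
    _ = V * Matrix.diagonal (fun i => f i * g i) * Vᴴ := by rw [this]

lemma conjD_conjTranspose {V : Matrix a a ℂ} (f : a → ℂ) :
    (V * Matrix.diagonal f * Vᴴ)ᴴ = V * Matrix.diagonal (fun i => star (f i)) * Vᴴ := by
  simp [Matrix.conjTranspose_mul, Matrix.diagonal_conjTranspose, Matrix.mul_assoc, Pi.star_def]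

lemma psd_le_one {T : Matrix a a ℂ} (hT : T.PosSemidef) (h2 : (T - T * T).PosSemidef) :
    ((1 : Matrix a a ℂ) - T).PosSemidef := by
  set V : Matrix a a ℂ := (hT.1.eigenvectorUnitary : Matrix a a ℂ)
  have hV : Vᴴ * V = 1 := by
    rw [← Matrix.star_eq_conjTranspose]
    exact (Matrix.mem_unitaryGroup_iff'.mp hT.1.eigenvectorUnitary.2)
  have hV2 : V * Vᴴ = 1 := by
    rw [← Matrix.star_eq_conjTranspose]
    exact (Matrix.mem_unitaryGroup_iff.mp hT.1.eigenvectorUnitary.2)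
  set μ := hT.1.eigenvalues
  have hspec : T = V * Matrix.diagonal (fun i => (μ i : ℂ)) * Vᴴ := by
    simpa [Matrix.star_eq_conjTranspose, Function.comp_def] using hT.1.spectral_theorem
  have hTT : T * T = V * Matrix.diagonal (fun i => (μ i : ℂ) * (μ i : ℂ)) * Vᴴ := by
    rw [hspec, conjD_mul hV]
  have hsub : T - T * T = V * Matrix.diagonal (fun i => (μ i : ℂ) - (μ i : ℂ) * (μ i : ℂ)) * Vᴴ := by
    rw [hTT]; conv_lhs => rw [hspec]
    rw [← Matrix.sub_mul, ← Matrix.mul_sub, Matrix.diagonal_sub]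
  have hdiag : (Matrix.diagonal (fun i => (μ i : ℂ) - (μ i : ℂ) * (μ i : ℂ))).PosSemidef := by
    have := h2.conjTranspose_mul_mul_same V
    rw [hsub] at this
    have e : Vᴴ * (V * Matrix.diagonal (fun i => (μ i : ℂ) - (μ i : ℂ) * (μ i : ℂ)) * Vᴴ) * V
        = Matrix.diagonal fun i => (μ i : ℂ) - (μ i : ℂ) * (μ i : ℂ) := by
      calc Vᴴ * (V * Matrix.diagonal (fun i => (μ i : ℂ) - (μ i : ℂ) * (μ i : ℂ)) * Vᴴ) * V
          = (Vᴴ * V) * Matrix.diagonal (fun i => (μ i : ℂ) - (μ i : ℂ) * (μ i : ℂ)) * (Vᴴ * V) := by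
            simp only [Matrix.mul_assoc]
        _ = _ := by rw [hV, Matrix.one_mul, Matrix.mul_one]
    rwa [e] at this
  have hmu1 : ∀ i, μ i ≤ 1 := by
    intro i
    have h0 := hT.eigenvalues_nonneg i
    have h1 := Matrix.posSemidef_diagonal_iff.mp hdiag i
    rw [show ((μ i : ℂ) - (μ i : ℂ) * (μ i : ℂ)) = ((μ i - μ i * μ i : ℝ) : ℂ) by push_cast; ring,
      Complex.zero_le_real] at h1
    nlinarith
  have hone : (1 : Matrix a a ℂ) = V * Matrix.diagonal (fun _ => (1:ℂ)) * Vᴴ := by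
    rw [Matrix.diagonal_one, Matrix.mul_one, hV2]
  have : (1 : Matrix a a ℂ) - T = V * Matrix.diagonal (fun i => ((1 - μ i : ℝ) : ℂ)) * Vᴴ := by
    rw [hspec]
    conv_lhs => rw [hone]
    rw [← Matrix.sub_mul, ← Matrix.mul_sub, Matrix.diagonal_sub]
    push_cast
    rfl
  rw [this]
  apply Matrix.PosSemidef.mul_mul_conjTranspose_same
  refine Matrix.posSemidef_diagonal_iff.mpr fun i => ?_
  rw [Complex.zero_le_real]
  linarith [hmu1 i]

lemma con_conjTranspose {M : Matrix a b ℂ} (h : Con M) : Con Mᴴ := by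
  have hT : (M * Mᴴ).PosSemidef := Matrix.posSemidef_self_mul_conjTranspose M
  have h2 : (M * Mᴴ - (M * Mᴴ) * (M * Mᴴ)).PosSemidef := by
    have h' := h.mul_mul_conjTranspose_same M
    have e : M * ((1 : Matrix b b ℂ) - Mᴴ * M) * Mᴴ = M * Mᴴ - (M * Mᴴ) * (M * Mᴴ) := by
      simp only [Matrix.mul_sub, Matrix.sub_mul, Matrix.mul_one, Matrix.one_mul, Matrix.mul_assoc]
    rwa [e] at h'
  have := psd_le_one hT h2
  rwa [Con, Matrix.conjTranspose_conjTranspose]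

lemma polar_left {X : Matrix a b ℂ} {P : Matrix a a ℂ} (hP : P.PosSemidef)
    (hPP : P * P = X * Xᴴ) :
    ∃ U : Matrix a b ℂ, X = P * U ∧ Con U := by
  set V : Matrix a a ℂ := (hP.1.eigenvectorUnitary : Matrix a a ℂ) with hVdef
  have hV : Vᴴ * V = 1 := by
    rw [← Matrix.star_eq_conjTranspose]
    exact Matrix.mem_unitaryGroup_iff'.mp hP.1.eigenvectorUnitary.2
  set μ := hP.1.eigenvalues with hμdef
  set D : (a → ℂ) → Matrix a a ℂ := fun f => V * Matrix.diagonal f * Vᴴ with hD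
  have hDmul : ∀ f g, D f * D g = D (fun i => f i * g i) := fun f g => conjD_mul hV f g
  have hDH : ∀ f, (D f)ᴴ = D (fun i => star (f i)) := fun f => conjD_conjTranspose f
  have hDcongr : ∀ {f g : a → ℂ}, (∀ i, f i = g i) → D f = D g := fun h => by
    rw [funext h]
  have hspec : P = D (fun i => (μ i : ℂ)) := by
    simpa [hD, Matrix.star_eq_conjTranspose, Function.comp_def] using hP.1.spectral_theorem
  set pinv : a → ℂ := fun i => if μ i = 0 then 0 else ((μ i : ℂ))⁻¹ with hpinv
  set cc : a → ℂ := fun i => (μ i : ℂ) * (μ i : ℂ) with hcc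
  have hXX : X * Xᴴ = D cc := by rw [← hPP, hspec, hDmul]
  have hPD : P * D pinv = D (fun i => if μ i = 0 then 0 else 1) := by
    rw [hspec, hDmul]
    refine hDcongr fun i => ?_
    by_cases h : μ i = 0
    · simp [hpinv, h]
    · simp [hpinv, h, mul_inv_cancel₀ (Complex.ofReal_ne_zero.mpr h)]
  set ind : a → ℂ := fun i => if μ i = 0 then 0 else 1 with hind
  have hindcc : D ind * D cc = D cc := by
    rw [hDmul]
    refine hDcongr fun i => ?_
    by_cases h : μ i = 0 <;> simp [hind, hcc, h]
  have hX : D ind * X = X := by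
    have hN : (X - D ind * X) * (X - D ind * X)ᴴ = 0 := by
      have expand : (X - D ind * X) * (X - D ind * X)ᴴ
          = (X * Xᴴ - D ind * (X * Xᴴ)) - (X * Xᴴ - D ind * (X * Xᴴ)) * (D ind)ᴴ := by
        simp only [Matrix.conjTranspose_mul, Matrix.sub_mul, Matrix.mul_sub,
          Matrix.conjTranspose_sub, Matrix.mul_assoc]
      have hz : X * Xᴴ - D ind * (X * Xᴴ) = 0 := by
        rw [hXX, hindcc, sub_self]
      rw [expand, hz, Matrix.zero_mul, sub_zero]
    have := Matrix.self_mul_conjTranspose_eq_zero.mp hN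
    rwa [sub_eq_zero, eq_comm] at this
  refine ⟨D pinv * X, ?_, ?_⟩
  · rw [← Matrix.mul_assoc, hPD, hX]
  · have hstarpinv : (fun i => star (pinv i)) = pinv := by
      funext i
      by_cases h : μ i = 0 <;>
        simp [hpinv, h, ← Complex.ofReal_inv, Complex.conj_ofReal]
    set pv2 : a → ℂ := fun i => pinv i * pinv i with hpv2
    set E : Matrix b b ℂ := Xᴴ * (D pv2 * X) with hE
    have hUU : (D pinv * X)ᴴ * (D pinv * X) = E := by
      rw [Matrix.conjTranspose_mul, hDH, hstarpinv, hE]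
      calc Xᴴ * D pinv * (D pinv * X) = Xᴴ * ((D pinv * D pinv) * X) := by
            simp only [Matrix.mul_assoc]
        _ = Xᴴ * (D pv2 * X) := by rw [hDmul]
    have hEH : Eᴴ = E := by
      have : (fun i => star (pv2 i)) = pv2 := by
        funext i; simp only [hpv2, star_mul', congrFun hstarpinv i]
      rw [hE, Matrix.conjTranspose_mul, Matrix.conjTranspose_mul, hDH, this,
        Matrix.conjTranspose_conjTranspose, Matrix.mul_assoc]
    have hpv2cc : ∀ i, pv2 i * cc i * pv2 i = pv2 i := by
      intro i
      by_cases h : μ i = 0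
      · simp [hpv2, hpinv, hcc, h]
      · have hne : (μ i : ℂ) ≠ 0 := Complex.ofReal_ne_zero.mpr h
        simp only [hpv2, hpinv, hcc, if_neg h]
        field_simp
    have hEE : E * E = E := by
      calc E * E = Xᴴ * ((D pv2 * (X * Xᴴ)) * (D pv2 * X)) := by
            rw [hE]; simp only [Matrix.mul_assoc]
        _ = Xᴴ * (((D pv2 * D cc) * D pv2) * X) := by rw [hXX]; simp only [Matrix.mul_assoc]
        _ = Xᴴ * (D (fun i => pv2 i * cc i * pv2 i) * X) := by rw [hDmul, hDmul]
        _ = E := by rw [hE, show D (fun i => pv2 i * cc i * pv2 i) = D pv2 from hDcongr hpv2cc]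
    have hfinal : (1 : Matrix b b ℂ) - E = ((1 : Matrix b b ℂ) - E)ᴴ * ((1 : Matrix b b ℂ) - E) := by
      simp only [Matrix.conjTranspose_sub, Matrix.conjTranspose_one, hEH, Matrix.sub_mul,
        Matrix.mul_sub, Matrix.one_mul, Matrix.mul_one, hEE]
      abel
    rw [Con, hUU, hfinal]
    exact Matrix.posSemidef_conjTranspose_mul_self _

lemma con_apply_abs_le {K : Matrix a a ℂ} (h : Con K) (i : a) : ‖K i i‖ ≤ 1 := by
  have key : ∀ (M : Matrix a a ℂ),
      (star (Pi.single i 1 : a → ℂ)) ⬝ᵥ (M *ᵥ Pi.single i 1) = M i i := by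
    intro M
    simp [dotProduct, Matrix.mulVec, Pi.single_apply, Finset.mul_sum, apply_ite,
      Finset.sum_ite_eq, Finset.sum_ite_eq']
  have h0 := h.dotProduct_mulVec_nonneg (Pi.single i 1)
  rw [key] at h0
  have hentry : ((1 : Matrix a a ℂ) - Kᴴ * K) i i
      = ((1 - ∑ j, Complex.normSq (K j i) : ℝ) : ℂ) := by
    simp only [Matrix.sub_apply, Matrix.one_apply_eq, Matrix.mul_apply,
      Matrix.conjTranspose_apply]
    push_cast
    congr 1
    exact Finset.sum_congr rfl fun j _ => by rw [Complex.normSq_eq_conj_mul_self]; rfl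
  rw [hentry, Complex.zero_le_real] at h0
  have h1 : Complex.normSq (K i i) ≤ 1 := by
    have := Finset.single_le_sum (f := fun j => Complex.normSq (K j i))
      (fun j _ => Complex.normSq_nonneg _) (Finset.mem_univ i)
    linarith
  have h2 : ‖K i i‖ ^ 2 ≤ 1 := by rw [Complex.sq_norm]; exact h1
  nlinarith [norm_nonneg (K i i)]

end Aux
section Key

variable {a b : Type*} [Fintype a] [Fintype b] [DecidableEq a] [DecidableEq b]

lemma abs_trace_le_fidelity (X Y : Matrix a b ℂ) :
    ‖(Y * Xᴴ).trace‖ ≤ fidelity (X * Xᴴ) (Y * Yᴴ) := by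
  have hXX := Matrix.posSemidef_self_mul_conjTranspose X
  have hYY := Matrix.posSemidef_self_mul_conjTranspose Y
  set P := msqrt (X * Xᴴ) with hPdef
  have hP : P.PosSemidef := msqrt_posSemidef hXX
  have hPP : P * P = X * Xᴴ := msqrt_mul_self hXX
  set Q := msqrt (Y * Yᴴ) with hQdef
  have hQ : Q.PosSemidef := msqrt_posSemidef hYY
  have hQQ : Q * Q = Y * Yᴴ := msqrt_mul_self hYY
  obtain ⟨U, hXU, hU⟩ := polar_left hP hPP
  obtain ⟨W, hYW, hW⟩ := polar_left hQ hQQ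
  set T := P * (Y * Yᴴ) * P with hT
  have hTeq : (Q * P)ᴴ * (Q * P) = T := by
    rw [Matrix.conjTranspose_mul, hP.1.eq, hQ.1.eq, hT, ← hQQ]
    simp only [Matrix.mul_assoc]
  have hTpsd : T.PosSemidef := hTeq ▸ Matrix.posSemidef_conjTranspose_mul_self (Q * P)
  set S := msqrt T with hSdef
  have hS : S.PosSemidef := msqrt_posSemidef hTpsd
  have hSS : S * S = (Q * P)ᴴ * ((Q * P)ᴴ)ᴴ := by
    rw [Matrix.conjTranspose_conjTranspose, hTeq, msqrt_mul_self hTpsd]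
  obtain ⟨U0, hPQ, hU0⟩ := polar_left hS hSS
  -- hPQ : (Q * P)ᴴ = S * U0
  have htr : (Y * Xᴴ).trace = (S * (U0 * (W * Uᴴ))).trace := by
    rw [hXU, hYW]
    calc (Q * W * (P * U)ᴴ).trace = ((Q * (W * (Uᴴ * P)))).trace := by
          rw [Matrix.conjTranspose_mul, hP.1.eq]
          simp only [Matrix.mul_assoc]
      _ = ((P * Q) * (W * Uᴴ)).trace := by
          rw [Matrix.trace_mul_comm Q]
          simp only [Matrix.mul_assoc]
          rw [Matrix.trace_mul_comm W]
          simp only [Matrix.mul_assoc]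
          rw [Matrix.trace_mul_comm Uᴴ]
          simp only [Matrix.mul_assoc]
      _ = (S * (U0 * (W * Uᴴ))).trace := by
          have : P * Q = S * U0 := by
            rw [← hPQ, Matrix.conjTranspose_mul, hP.1.eq, hQ.1.eq]
          rw [this]
          simp only [Matrix.mul_assoc]
  set K := U0 * (W * Uᴴ) with hKdef
  have hK : Con K := con_mul hU0 (con_mul hW (con_conjTranspose hU))
  -- spectral decomposition of S
  set V : Matrix a a ℂ := (hS.1.eigenvectorUnitary : Matrix a a ℂ) with hVdef
  have hV : Vᴴ * V = 1 := by
    rw [← Matrix.star_eq_conjTranspose]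
    exact Matrix.mem_unitaryGroup_iff'.mp hS.1.eigenvectorUnitary.2
  have hV2 : V * Vᴴ = 1 := by
    rw [← Matrix.star_eq_conjTranspose]
    exact Matrix.mem_unitaryGroup_iff.mp hS.1.eigenvectorUnitary.2
  set μ := hS.1.eigenvalues with hμdef
  have hspec : S = V * Matrix.diagonal (fun i => (μ i : ℂ)) * Vᴴ := by
    simpa [Matrix.star_eq_conjTranspose, Function.comp_def] using hS.1.spectral_theorem
  have hConV : Con V := by rw [Con, hV, sub_self]; exact Matrix.PosSemidef.zero
  have hConVH : Con Vᴴ := by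
    rw [Con, Matrix.conjTranspose_conjTranspose, hV2, sub_self]; exact Matrix.PosSemidef.zero
  set K' := Vᴴ * (K * V) with hK'def
  have hK' : Con K' := con_mul hConVH (con_mul hK hConV)
  have htr2 : (S * K).trace = ∑ i, (μ i : ℂ) * K' i i := by
    calc (S * K).trace = (Matrix.diagonal (fun i => (μ i : ℂ)) * K').trace := by
          rw [hspec, hK'def]
          simp only [Matrix.mul_assoc]
          rw [Matrix.trace_mul_comm V]
          simp only [Matrix.mul_assoc]
      _ = ∑ i, (μ i : ℂ) * K' i i := by
          simp [Matrix.trace, Matrix.diag, Matrix.mul_apply, Matrix.diagonal_apply,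
            Finset.sum_ite_eq, Matrix.diagonal_mul]
  have habs : ‖(S * K).trace‖ ≤ ∑ i, μ i := by
    rw [htr2]
    refine le_trans (norm_sum_le _ _) ?_
    refine Finset.sum_le_sum fun i _ => ?_
    rw [norm_mul]
    have h1 : ‖((μ i : ℂ))‖ = μ i := by
      rw [Complex.norm_real, Real.norm_eq_abs, abs_of_nonneg (hS.eigenvalues_nonneg i)]
    rw [h1]
    calc μ i * ‖K' i i‖ ≤ μ i * 1 :=
          mul_le_mul_of_nonneg_left (con_apply_abs_le hK' i) (hS.eigenvalues_nonneg i)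
      _ = μ i := mul_one _
  have hfid : fidelity (X * Xᴴ) (Y * Yᴴ) = ∑ i, μ i := by
    rw [fidelity, ← hPdef, ← hT, ← hSdef]
    rw [hspec, Matrix.trace_mul_cycle, hV, Matrix.one_mul, Matrix.trace_diagonal]
    rw [show (∑ i, (μ i : ℂ)) = ((∑ i, μ i : ℝ) : ℂ) by push_cast; rfl]
    exact Complex.ofReal_re _
  rw [htr, hfid]
  exact habs

end Key
theorem stmt17 (d d2 : ℕ)
    (ρ : Matrix ((Fin d × Fin d) × Fin d2) ((Fin d × Fin d) × Fin d2) ℂ)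
    (hρ : IsDensity ρ)
    (ρAB : Matrix (Fin d × Fin d) (Fin d × Fin d) ℂ) (hAB : ρAB = traceRight ρ)
    (ρAC ρBC : Matrix (Fin d × Fin d2) (Fin d × Fin d2) ℂ)
    (hAC : ρAC = Matrix.of fun p q => ∑ b, ρ ((p.1, b), p.2) ((q.1, b), q.2))
    (hBC : ρBC = Matrix.of fun p q => ∑ a, ρ ((a, p.1), p.2) ((a, q.1), q.2)) :
    fidelity ρAC ρBC
      ≥ |((Pasym d * ρAB).trace).re - ((Psym d * ρAB).trace).re| := by
  obtain ⟨hpsd, -⟩ := hρ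
  set R := msqrt ρ with hRdef
  have hR : R.PosSemidef := msqrt_posSemidef hpsd
  have hRH : Rᴴ = R := hR.1.eq
  have hRR : R * Rᴴ = ρ := by rw [hRH]; exact msqrt_mul_self hpsd
  set X : Matrix (Fin d × Fin d2) (Fin d × ((Fin d × Fin d) × Fin d2)) ℂ :=
    Matrix.of (fun p q => R ((p.1, q.1), p.2) q.2) with hXdef
  set Y : Matrix (Fin d × Fin d2) (Fin d × ((Fin d × Fin d) × Fin d2)) ℂ :=
    Matrix.of (fun p q => R ((q.1, p.1), p.2) q.2) with hYdef
  have hXXe : ρAC = X * Xᴴ := by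
    rw [hAC]
    ext p q
    simp only [Matrix.mul_apply, Matrix.conjTranspose_apply, Matrix.of_apply, hXdef]
    rw [Fintype.sum_prod_type]
    refine Finset.sum_congr rfl fun b _ => ?_
    rw [← hRR]
    simp only [Matrix.mul_apply, Matrix.conjTranspose_apply]
  have hYYe : ρBC = Y * Yᴴ := by
    rw [hBC]
    ext p q
    simp only [Matrix.mul_apply, Matrix.conjTranspose_apply, Matrix.of_apply, hYdef]
    rw [Fintype.sum_prod_type]
    refine Finset.sum_congr rfl fun b _ => ?_
    rw [← hRR]
    simp only [Matrix.mul_apply, Matrix.conjTranspose_apply]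
  -- the swap trace
  have hswapline : ∀ (u : Fin d × Fin d) (g : Fin d × Fin d → ℂ),
      (∑ v, swap d u v * g v) = g (u.2, u.1) := by
    intro u g
    rw [Finset.sum_eq_single (u.2, u.1)]
    · simp [swap]
    · intro v _ hv
      have : ¬(u.1 = v.2 ∧ u.2 = v.1) := by
        rintro ⟨h1, h2⟩
        exact hv (by cases v; cases u; simp_all)
      simp [swap, this]
    · intro h; exact absurd (Finset.mem_univ _) h
  have hswap : (swap d * ρAB).trace
      = ∑ a : Fin d, ∑ b : Fin d, ∑ c1 : Fin d2, ∑ k,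
          R ((b, a), c1) k * star (R ((a, b), c1) k) := by
    rw [hAB]
    simp only [Matrix.trace, Matrix.diag, Matrix.mul_apply]
    rw [Fintype.sum_prod_type]
    refine Finset.sum_congr rfl fun a _ => Finset.sum_congr rfl fun b _ => ?_
    rw [hswapline (a, b) (fun v => traceRight ρ v (a, b))]
    simp only [traceRight, Matrix.of_apply]
    refine Finset.sum_congr rfl fun c1 _ => ?_
    rw [← hRR]
    simp only [Matrix.mul_apply, Matrix.conjTranspose_apply]
  have hYX : (Y * Xᴴ).trace
      = ∑ a : Fin d, ∑ c1 : Fin d2, ∑ b : Fin d, ∑ k,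
          R ((b, a), c1) k * star (R ((a, b), c1) k) := by
    simp only [Matrix.trace, Matrix.diag, Matrix.mul_apply, Matrix.conjTranspose_apply,
      hXdef, hYdef, Matrix.of_apply]
    rw [Fintype.sum_prod_type]
    refine Finset.sum_congr rfl fun a _ => Finset.sum_congr rfl fun c1 _ => ?_
    rw [Fintype.sum_prod_type]
  have hkey : (swap d * ρAB).trace = (Y * Xᴴ).trace := by
    rw [hswap, hYX]
    exact Finset.sum_congr rfl fun a _ => Finset.sum_comm
  -- reduce the RHS
  have hPds : Pasym d - Psym d = -(swap d) := by
    ext i j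
    simp only [Pasym, Psym, Matrix.sub_apply, Matrix.smul_apply, Matrix.add_apply,
      Matrix.neg_apply, smul_eq_mul]
    ring
  have hA : ((Pasym d * ρAB).trace).re - ((Psym d * ρAB).trace).re
      = -(((swap d * ρAB).trace).re) := by
    have h1 : Pasym d * ρAB - Psym d * ρAB = -(swap d * ρAB) := by
      rw [← Matrix.sub_mul, hPds, Matrix.neg_mul]
    calc ((Pasym d * ρAB).trace).re - ((Psym d * ρAB).trace).re
        = ((Pasym d * ρAB).trace - (Psym d * ρAB).trace).re := by rw [Complex.sub_re]
      _ = ((Pasym d * ρAB - Psym d * ρAB).trace).re := by rw [Matrix.trace_sub]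
      _ = ((-(swap d * ρAB)).trace).re := by rw [h1]
      _ = -(((swap d * ρAB).trace).re) := by rw [Matrix.trace_neg, Complex.neg_re]
  rw [ge_iff_le, hA, abs_neg]
  calc |((swap d * ρAB).trace).re|
      ≤ ‖(swap d * ρAB).trace‖ := Complex.abs_re_le_norm _
    _ = ‖(Y * Xᴴ).trace‖ := by rw [hkey]
    _ ≤ fidelity (X * Xᴴ) (Y * Yᴴ) := abs_trace_le_fidelity X Y
    _ = fidelity ρAC ρBC := by rw [← hXXe, ← hYYe]
end QEMD
end
end
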